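/- For any near-endomorphism f of ℤ, exactly one of the following holds: f is bounded; for every C > 0 there exists N such that f(n) > C for all n > N; or for every C > 0 there exists N such that -f(n) > C for all n > N. -/

import Mathlib

lemma near_endo_tendsto_pos (f : ℤ → ℤ) (C : ℤ)
    (hC : ∀ a b : ℤ, |f (a + b) - f a - f b| ≤ C)
    (a : ℤ) (ha : 0 < a) (hfa : 2 * C < f a) :
    ∀ K : ℤ, 0 < K → ∃ N : ℤ, ∀ n > N, K < f n := by
  have hC0 : 0 ≤ C := le_trans (abs_nonneg _) (hC 0 0)
  have hfa1 : C + 1 ≤ f a - C := by omega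
  have keyN : ∀ k : ℕ, ((k : ℤ) + 1) * (f a - C) + C ≤ f (((k : ℤ) + 1) * a) := by
    intro k
    induction k with
    | zero => simp only [Nat.cast_zero, zero_add, one_mul]; linarith
    | succ k ih =>
      have h1 := abs_le.mp (hC (((k : ℤ) + 1) * a) a)
      have he : (((k : ℕ) + 1 : ℕ) : ℤ) + 1 = ((k : ℤ) + 1) + 1 := by push_cast; ring
      rw [he]
      have he2 : (((k : ℤ) + 1) + 1) * a = ((k : ℤ) + 1) * a + a := by ring
      rw [he2]
      nlinarith
  have key : ∀ k : ℤ, 1 ≤ k → k * (f a - C) + C ≤ f (k * a) := by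
    intro k hk
    obtain ⟨m, rfl⟩ : ∃ m : ℕ, k = (m : ℤ) + 1 := by
      refine ⟨(k - 1).toNat, ?_⟩
      rw [Int.toNat_of_nonneg (by omega)]; ring
    exact keyN m
  intro K hK
  have hne : ((Finset.Ico (0:ℤ) a).image f).Nonempty :=
    ⟨f 0, Finset.mem_image.mpr ⟨0, Finset.mem_Ico.mpr ⟨le_refl 0, ha⟩, rfl⟩⟩
  set m := ((Finset.Ico (0:ℤ) a).image f).min' hne with hm
  have hmle : ∀ r : ℤ, 0 ≤ r → r < a → m ≤ f r := fun r h1 h2 =>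
    Finset.min'_le _ _ (Finset.mem_image.mpr ⟨r, Finset.mem_Ico.mpr ⟨h1, h2⟩, rfl⟩)
  set t := max (K - m) 0 + 1 with ht
  have ht1 : 1 ≤ t := by have := le_max_right (K - m) 0; omega
  have htK : K - m + 1 ≤ t := by have := le_max_left (K - m) 0; omega
  refine ⟨t * a, fun n hn => ?_⟩
  set q := n / a with hq
  have hr0 : 0 ≤ n % a := Int.emod_nonneg n (ne_of_gt ha)
  have hra : n % a < a := Int.emod_lt_of_pos n ha
  have hqt : t ≤ q := by
    rw [hq, Int.le_ediv_iff_mul_le ha]; omega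
  have hq1 : 1 ≤ q := le_trans ht1 hqt
  have hkey := key q hq1
  have hsum : q * a + n % a = n := by
    rw [mul_comm]; exact Int.mul_ediv_add_emod n a
  have h3 := abs_le.mp (hC (q * a) (n % a))
  rw [hsum] at h3
  have hmr := hmle (n % a) hr0 hra
  have hqq : q ≤ q * (f a - C) :=
    le_mul_of_one_le_right (by linarith) (by linarith)
  linarith [h3.1, h3.2]

theorem near_endo_trichotomy (f : ℤ → ℤ)
    (hf : ∃ C : ℤ, ∀ a b : ℤ, |f (a + b) - f a - f b| ≤ C) :
    (((∃ B : ℤ, ∀ n : ℤ, |f n| ≤ B) ∧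
        ¬(∀ C : ℤ, 0 < C → ∃ N : ℤ, ∀ n > N, C < f n) ∧
        ¬(∀ C : ℤ, 0 < C → ∃ N : ℤ, ∀ n > N, C < -f n)) ∨
      (¬(∃ B : ℤ, ∀ n : ℤ, |f n| ≤ B) ∧
        (∀ C : ℤ, 0 < C → ∃ N : ℤ, ∀ n > N, C < f n) ∧
        ¬(∀ C : ℤ, 0 < C → ∃ N : ℤ, ∀ n > N, C < -f n)) ∨
      (¬(∃ B : ℤ, ∀ n : ℤ, |f n| ≤ B) ∧
        ¬(∀ C : ℤ, 0 < C → ∃ N : ℤ, ∀ n > N, C < f n) ∧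
        (∀ C : ℤ, 0 < C → ∃ N : ℤ, ∀ n > N, C < -f n))) := by
  obtain ⟨C, hC⟩ := hf
  have hC0 : 0 ≤ C := le_trans (abs_nonneg _) (hC 0 0)
  by_cases hb : ∃ B : ℤ, ∀ n : ℤ, |f n| ≤ B
  · left
    obtain ⟨B, hB⟩ := hb
    have hB0 : 0 ≤ B := le_trans (abs_nonneg _) (hB 0)
    refine ⟨⟨B, hB⟩, ?_, ?_⟩
    · intro h
      obtain ⟨N, hN⟩ := h (B + 1) (by omega)
      have h1 := hN (N + 1) (by omega)
      have h2 := abs_le.mp (hB (N + 1))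
      omega
    · intro h
      obtain ⟨N, hN⟩ := h (B + 1) (by omega)
      have h1 := hN (N + 1) (by omega)
      have h2 := abs_le.mp (hB (N + 1))
      omega
  · -- f unbounded: find a > 0 with 2C < |f a|
    have hb' : ∀ B : ℤ, ∃ n : ℤ, B < |f n| := by
      intro B
      by_contra h
      push_neg at h
      exact hb ⟨B, h⟩
    obtain ⟨n, hn⟩ := hb' (3 * C + |f 0|)
    have hex : ∃ a : ℤ, 0 < a ∧ 2 * C < |f a| := by
      rcases lt_trichotomy n 0 with h | h | h
      · refine ⟨-n, by omega, ?_⟩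
        have h1 : |f (n + -n) - f n - f (-n)| ≤ C := hC n (-n)
        rw [add_neg_cancel] at h1
        have h2 : |f n| ≤ |f 0 - f (-n)| + |f 0 - f n - f (-n)| := by
          have hx := abs_sub (f 0 - f (-n)) (f 0 - f n - f (-n))
          have he : (f 0 - f (-n)) - (f 0 - f n - f (-n)) = f n := by ring
          rwa [he] at hx
        have h3 : |f 0 - f (-n)| ≤ |f 0| + |f (-n)| := abs_sub _ _
        have h4 : |f 0 - f n - f (-n)| = |f 0 - f n - f (-n)| := rfl
        have h5 : 0 ≤ |f 0| := abs_nonneg _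
        linarith
      · exfalso
        subst h
        have := abs_nonneg (f 0)
        omega
      · exact ⟨n, h, by have := abs_nonneg (f 0); omega⟩
    obtain ⟨a, ha, hfa⟩ := hex
    have hCneg : ∀ x y : ℤ, |(fun n => -f n) (x + y) - (fun n => -f n) x - (fun n => -f n) y| ≤ C := by
      intro x y
      simp only
      rw [show -f (x + y) - -f x - -f y = -(f (x + y) - f x - f y) by ring, abs_neg]
      exact hC x y
    rcases abs_cases (f a) with ⟨he, _⟩ | ⟨he, _⟩
    · -- f a > 2C : positive case
      right; left
      have hpos := near_endo_tendsto_pos f C hC a ha (by omega)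
      refine ⟨hb, hpos, ?_⟩
      intro hneg
      obtain ⟨N1, hN1⟩ := hpos 1 (by norm_num : (0:ℤ) < 1)
      obtain ⟨N2, hN2⟩ := hneg 1 (by norm_num : (0:ℤ) < 1)
      have g1 := hN1 (max N1 N2 + 1) (by have := le_max_left N1 N2; omega)
      have g2 := hN2 (max N1 N2 + 1) (by have := le_max_right N1 N2; omega)
      omega
    · -- f a < -2C : negative case
      right; right
      have hneg := near_endo_tendsto_pos (fun n => -f n) C hCneg a ha (by omega)
      refine ⟨hb, ?_, hneg⟩
      intro hpos
      obtain ⟨N1, hN1⟩ := hpos 1 (by norm_num : (0:ℤ) < 1)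
      obtain ⟨N2, hN2⟩ := hneg 1 (by norm_num : (0:ℤ) < 1)
      have g1 := hN1 (max N1 N2 + 1) (by have := le_max_left N1 N2; omega)
      have g2 := hN2 (max N1 N2 + 1) (by have := le_max_right N1 N2; omega)
      omega
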